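/- Let 𝒫 be the set of 15 two‑qubit Pauli strings, i.e., Kronecker products P ⊗ Q with P, Q ∈ {1, X, Y, Z} (4×4 complex matrices), excluding 1 ⊗ 1. Define M₁ = {X⊗1, Y⊗1, Z⊗X, Z⊗Y, Z⊗Z}, M₂ = {X⊗1, Z⊗1, Y⊗X, Y⊗Y, Y⊗Z}, M₃ = {Y⊗1, Z⊗1, X⊗X, X⊗Y, X⊗Z}, M₄ = {1⊗X, 1⊗Y, X⊗Z, Y⊗Z, Z⊗Z}, M₅ = {1⊗X, 1⊗Z, X⊗Y, Y⊗Y, Z⊗Y}, M₆ = {1⊗Y, 1⊗Z, X⊗X, Y⊗X, Z⊗X}. Then a 5-element subset T ⊆ 𝒫 satisfies A * B = −(B * A) for all distinct A, B ∈ T (i.e., T is pairwise anticommuting) if and only if T is one of M₁, M₂, M₃, M₄, M₅, M₆. -/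

import Mathlib

open Kronecker

namespace Stmt2

/-- The Pauli matrix `X`. -/
noncomputable def σx : Matrix (Fin 2) (Fin 2) ℂ := !![0, 1; 1, 0]

/-- The Pauli matrix `Y`. -/
noncomputable def σy : Matrix (Fin 2) (Fin 2) ℂ := !![0, -Complex.I; Complex.I, 0]

/-- The Pauli matrix `Z`. -/
noncomputable def σz : Matrix (Fin 2) (Fin 2) ℂ := !![1, 0; 0, -1]

/-- The set `{1, X, Y, Z}` of one-qubit Pauli matrices. -/
noncomputable def pauli1 : Set (Matrix (Fin 2) (Fin 2) ℂ) := {1, σx, σy, σz}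

/-- The set `𝒫` of the 15 two-qubit Pauli strings: Kronecker products `P ⊗ Q` with
`P, Q ∈ {1, X, Y, Z}`, excluding `1 ⊗ 1`. -/
noncomputable def pauliStrings : Set (Matrix (Fin 2 × Fin 2) (Fin 2 × Fin 2) ℂ) :=
  {A | (∃ P ∈ pauli1, ∃ Q ∈ pauli1, A = P ⊗ₖ Q) ∧
    A ≠ (1 : Matrix (Fin 2) (Fin 2) ℂ) ⊗ₖ (1 : Matrix (Fin 2) (Fin 2) ℂ)}

noncomputable def M₁ : Set (Matrix (Fin 2 × Fin 2) (Fin 2 × Fin 2) ℂ) :=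
  {σx ⊗ₖ 1, σy ⊗ₖ 1, σz ⊗ₖ σx, σz ⊗ₖ σy, σz ⊗ₖ σz}

noncomputable def M₂ : Set (Matrix (Fin 2 × Fin 2) (Fin 2 × Fin 2) ℂ) :=
  {σx ⊗ₖ 1, σz ⊗ₖ 1, σy ⊗ₖ σx, σy ⊗ₖ σy, σy ⊗ₖ σz}

noncomputable def M₃ : Set (Matrix (Fin 2 × Fin 2) (Fin 2 × Fin 2) ℂ) :=
  {σy ⊗ₖ 1, σz ⊗ₖ 1, σx ⊗ₖ σx, σx ⊗ₖ σy, σx ⊗ₖ σz}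

noncomputable def M₄ : Set (Matrix (Fin 2 × Fin 2) (Fin 2 × Fin 2) ℂ) :=
  {(1 : Matrix (Fin 2) (Fin 2) ℂ) ⊗ₖ σx, (1 : Matrix (Fin 2) (Fin 2) ℂ) ⊗ₖ σy,
    σx ⊗ₖ σz, σy ⊗ₖ σz, σz ⊗ₖ σz}

noncomputable def M₅ : Set (Matrix (Fin 2 × Fin 2) (Fin 2 × Fin 2) ℂ) :=
  {(1 : Matrix (Fin 2) (Fin 2) ℂ) ⊗ₖ σx, (1 : Matrix (Fin 2) (Fin 2) ℂ) ⊗ₖ σz,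
    σx ⊗ₖ σy, σy ⊗ₖ σy, σz ⊗ₖ σy}

noncomputable def M₆ : Set (Matrix (Fin 2 × Fin 2) (Fin 2 × Fin 2) ℂ) :=
  {(1 : Matrix (Fin 2) (Fin 2) ℂ) ⊗ₖ σy, (1 : Matrix (Fin 2) (Fin 2) ℂ) ⊗ₖ σz,
    σx ⊗ₖ σx, σy ⊗ₖ σx, σz ⊗ₖ σx}

/-! ### Auxiliary combinatorial setup -/

/-- One-qubit Pauli matrices indexed by `Fin 4`. -/
noncomputable def p : Fin 4 → Matrix (Fin 2) (Fin 2) ℂ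
  | 0 => 1
  | 1 => σx
  | 2 => σy
  | 3 => σz

/-- Two-qubit Pauli strings indexed by pairs. -/
noncomputable def Pm (a : Fin 4 × Fin 4) : Matrix (Fin 2 × Fin 2) (Fin 2 × Fin 2) ℂ :=
  p a.1 ⊗ₖ p a.2

/-- One-qubit anticommutation indicator. -/
def ac (i j : Fin 4) : Bool := i ≠ 0 && j ≠ 0 && i ≠ j

/-- Two-qubit anticommutation indicator. -/
def ac2 (a b : Fin 4 × Fin 4) : Bool := xor (ac a.1 b.1) (ac a.2 b.2)

lemma p_sq (i : Fin 4) : p i * p i = 1 := by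
  fin_cases i <;>
    simp [p, σx, σy, σz, Matrix.one_fin_two, Matrix.mul_fin_two, Complex.ext_iff] <;>
    norm_num

lemma p_comm {i j : Fin 4} (h : ac i j = false) : p i * p j = p j * p i := by
  fin_cases i <;> fin_cases j <;> simp_all [ac] <;>
    simp [p, σx, σy, σz, Matrix.mul_fin_two]

lemma p_anti {i j : Fin 4} (h : ac i j = true) : p i * p j = -(p j * p i) := by
  fin_cases i <;> fin_cases j <;> simp_all [ac] <;>
    · simp only [p, σx, σy, σz, Matrix.mul_fin_two]
      norm_num [← Matrix.etaExpand_eq (-(_ * _)), Matrix.etaExpand, Complex.ext_iff]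

lemma p_trace {i j : Fin 4} (h : i ≠ j) : (p i * p j).trace = 0 := by
  fin_cases i <;> fin_cases j <;> simp_all <;>
    · simp only [p, σx, σy, σz, Matrix.mul_fin_two, Matrix.one_fin_two]
      norm_num [Matrix.trace_fin_two]

lemma Pm_sq (a : Fin 4 × Fin 4) : Pm a * Pm a = 1 := by
  rw [Pm, ← Matrix.mul_kronecker_mul, p_sq, p_sq, Matrix.one_kronecker_one]

lemma Pm_inj : Function.Injective Pm := by
  intro a b h
  by_contra hne
  have h1 : Pm a * Pm b = 1 := by rw [h]; exact Pm_sq b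
  have h2 : (Pm a * Pm b).trace = 0 := by
    rw [Pm, Pm, ← Matrix.mul_kronecker_mul, Matrix.trace_kronecker]
    by_cases hc : a.1 = b.1
    · have : a.2 ≠ b.2 := fun hc2 => hne (Prod.ext hc hc2)
      rw [p_trace this, mul_zero]
    · rw [p_trace hc, zero_mul]
  rw [h1, Matrix.trace_one] at h2
  norm_num at h2

lemma Pm_mul_Pm_mul (a b : Fin 4 × Fin 4) : (Pm a * Pm b) * (Pm b * Pm a) = 1 := by
  rw [mul_assoc, ← mul_assoc (Pm b) (Pm b) (Pm a), Pm_sq, one_mul, Pm_sq]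

lemma neg_kron (A B : Matrix (Fin 2) (Fin 2) ℂ) : (-A) ⊗ₖ B = -(A ⊗ₖ B) := by
  ext i j
  simp [Matrix.kroneckerMap_apply]

lemma kron_neg (A B : Matrix (Fin 2) (Fin 2) ℂ) : A ⊗ₖ (-B) = -(A ⊗ₖ B) := by
  ext i j
  simp [Matrix.kroneckerMap_apply]

lemma Pm_mul_cases (a b : Fin 4 × Fin 4) :
    Pm a * Pm b = if ac2 a b = true then -(Pm b * Pm a) else Pm b * Pm a := by
  rcases Bool.eq_false_or_eq_true (ac a.1 b.1) with h1 | h1 <;>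
    rcases Bool.eq_false_or_eq_true (ac a.2 b.2) with h2 | h2
  · rw [if_neg (by simp [ac2, h1, h2]), Pm, Pm, ← Matrix.mul_kronecker_mul,
      ← Matrix.mul_kronecker_mul, p_anti h1, p_anti h2, neg_kron, kron_neg, neg_neg]
  · rw [if_pos (by simp [ac2, h1, h2]), Pm, Pm, ← Matrix.mul_kronecker_mul,
      ← Matrix.mul_kronecker_mul, p_anti h1, p_comm h2, neg_kron]
  · rw [if_pos (by simp [ac2, h1, h2]), Pm, Pm, ← Matrix.mul_kronecker_mul,
      ← Matrix.mul_kronecker_mul, p_comm h1, p_anti h2, kron_neg]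
  · rw [if_neg (by simp [ac2, h1, h2]), Pm, Pm, ← Matrix.mul_kronecker_mul,
      ← Matrix.mul_kronecker_mul, p_comm h1, p_comm h2]

lemma anti_iff {a b : Fin 4 × Fin 4} (hne : a ≠ b) :
    Pm a * Pm b = -(Pm b * Pm a) ↔ ac2 a b = true := by
  constructor
  · intro h
    by_contra hf
    rw [Bool.not_eq_true] at hf
    have hcomm : Pm a * Pm b = Pm b * Pm a := by
      rw [Pm_mul_cases, if_neg (by simp [hf])]
    rw [hcomm] at h
    have hz : Pm b * Pm a = 0 := by
      have h2 : (2 : ℂ) • (Pm b * Pm a) = 0 := by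
        rw [two_smul]
        nth_rewrite 1 [h]
        exact neg_add_cancel _
      rcases smul_eq_zero.mp h2 with h' | h'
      · norm_num at h'
      · exact h'
    have := Pm_mul_Pm_mul b a
    rw [hz, zero_mul] at this
    exact one_ne_zero this.symm
  · intro h
    rw [Pm_mul_cases, if_pos h]

/-! ### The decidable combinatorial core -/

def L : List (Fin 4 × Fin 4) :=
  [(0,1),(0,2),(0,3),(1,0),(1,1),(1,2),(1,3),(2,0),(2,1),(2,2),(2,3),(3,0),(3,1),(3,2),(3,3)]

def pairwiseB : List (Fin 4 × Fin 4) → Bool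
  | [] => true
  | a :: l => l.all (fun b => ac2 a b) && pairwiseB l

def l₁ : List (Fin 4 × Fin 4) := [(1,0),(2,0),(3,1),(3,2),(3,3)]
def l₂ : List (Fin 4 × Fin 4) := [(1,0),(2,1),(2,2),(2,3),(3,0)]
def l₃ : List (Fin 4 × Fin 4) := [(1,1),(1,2),(1,3),(2,0),(3,0)]
def l₄ : List (Fin 4 × Fin 4) := [(0,1),(0,2),(1,3),(2,3),(3,3)]
def l₅ : List (Fin 4 × Fin 4) := [(0,1),(0,3),(1,2),(2,2),(3,2)]
def l₆ : List (Fin 4 × Fin 4) := [(0,2),(0,3),(1,1),(2,1),(3,1)]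

def sols : List (List (Fin 4 × Fin 4)) := [l₁, l₂, l₃, l₄, l₅, l₆]

set_option maxRecDepth 100000 in
theorem checkL : (L.sublistsLen 5).all
    (fun s => pairwiseB s == decide (s ∈ sols)) = true := by decide

/-- The linear order used for sorting. -/
def rel (a b : Fin 4 × Fin 4) : Prop := a.1.val * 4 + a.2.val ≤ b.1.val * 4 + b.2.val

instance : DecidableRel rel := fun _ _ => Nat.decLe _ _
instance : IsTrans (Fin 4 × Fin 4) rel := ⟨by decide⟩
instance : IsAntisymm (Fin 4 × Fin 4) rel := ⟨by decide⟩
instance : IsTotal (Fin 4 × Fin 4) rel := ⟨by decide⟩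

lemma L_sorted : L.Pairwise rel := by
  decide

lemma mem_L {x : Fin 4 × Fin 4} (h : x ≠ (0, 0)) : x ∈ L := by
  revert h; revert x; decide

lemma ac2_symm (a b : Fin 4 × Fin 4) : ac2 a b = ac2 b a := by
  revert a b; decide

lemma pairwiseB_iff (l : List (Fin 4 × Fin 4)) :
    pairwiseB l = true ↔ l.Pairwise (fun a b => ac2 a b = true) := by
  induction l with
  | nil => simp [pairwiseB]
  | cons a l ih => simp [pairwiseB, List.pairwise_cons, ih, and_comm]

/-! ### Main theorem -/

lemma set5_perm₁ {α : Type*} (a b c d e : α) : ({a, b, c, d, e} : Set α) = {a, e, b, c, d} := by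
  ext x
  simp only [Set.mem_insert_iff, Set.mem_singleton_iff]
  tauto

lemma set5_perm₂ {α : Type*} (a b c d e : α) : ({a, b, c, d, e} : Set α) = {d, e, a, b, c} := by
  ext x
  simp only [Set.mem_insert_iff, Set.mem_singleton_iff]
  tauto

set_option maxHeartbeats 1000000 in
/-- A 5-element subset of the two-qubit Pauli strings is pairwise anticommuting if and
only if it is one of the six sets `M₁, …, M₆`. -/
theorem stmt_2 (T : Set (Matrix (Fin 2 × Fin 2) (Fin 2 × Fin 2) ℂ))
    (hT : T ⊆ pauliStrings) (hcard : T.ncard = 5) :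
    (∀ A ∈ T, ∀ B ∈ T, A ≠ B → A * B = -(B * A)) ↔
      (T = M₁ ∨ T = M₂ ∨ T = M₃ ∨ T = M₄ ∨ T = M₅ ∨ T = M₆) := by
  classical
  -- every element of T is Pm a for a unique a ≠ (0,0)
  have hPT : ∀ A ∈ T, ∃ a : Fin 4 × Fin 4, a ≠ (0, 0) ∧ Pm a = A := by
    intro A hA
    obtain ⟨⟨P, hP, Q, hQ, hAeq⟩, hne⟩ := hT hA
    have hp1 : ∃ i : Fin 4, p i = P := by
      rcases hP with h | h | h | h
      exacts [⟨0, h.symm⟩, ⟨1, h.symm⟩, ⟨2, h.symm⟩, ⟨3, h.symm⟩]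
    have hq1 : ∃ j : Fin 4, p j = Q := by
      rcases hQ with h | h | h | h
      exacts [⟨0, h.symm⟩, ⟨1, h.symm⟩, ⟨2, h.symm⟩, ⟨3, h.symm⟩]
    obtain ⟨i, hi⟩ := hp1
    obtain ⟨j, hj⟩ := hq1
    refine ⟨(i, j), ?_, ?_⟩
    · intro hctr
      apply hne
      rw [hAeq, ← hi, ← hj]
      have h1 : i = 0 := congrArg Prod.fst hctr
      have h2 : j = 0 := congrArg Prod.snd hctr
      rw [h1, h2]; rfl
    · rw [Pm, hAeq, hi, hj]
  have hTr : T ⊆ Set.range Pm := by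
    intro A hA
    obtain ⟨a, _, ha⟩ := hPT A hA
    exact ⟨a, ha⟩
  set S0 : Set (Fin 4 × Fin 4) := Pm ⁻¹' T with hS0
  have him : Pm '' S0 = T := Set.image_preimage_eq_of_subset hTr
  have hS0card : S0.ncard = 5 := by
    rw [← Set.ncard_image_of_injective S0 Pm_inj, him, hcard]
  have hfin : S0.Finite := Set.toFinite _
  set S : Finset (Fin 4 × Fin 4) := hfin.toFinset with hSdef
  have hScoe : (↑S : Set (Fin 4 × Fin 4)) = S0 := hfin.coe_toFinset
  have hScard : S.card = 5 := by
    rw [← hS0card, Set.ncard_eq_toFinset_card S0 hfin]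
  have h00 : (0, 0) ∉ S0 := by
    intro hctr
    have : Pm (0, 0) ∈ T := hctr
    exact (hT this).2 rfl
  -- the sorted list of S
  set s : List (Fin 4 × Fin 4) := S.sort rel with hsdef
  have hs_nodup : s.Nodup := S.sort_nodup rel
  have hs_len : s.length = 5 := by rw [hsdef, Finset.length_sort, hScard]
  have hs_mem : ∀ x, x ∈ s ↔ x ∈ S0 := by
    intro x
    rw [hsdef, Finset.mem_sort, ← hScoe]; rfl
  have hs_sub : List.Sublist s L := by
    apply List.sublist_of_subperm_of_pairwise (r := rel)
    · exact List.subperm_of_subset hs_nodup (fun x hx => by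
        refine mem_L ?_
        intro hctr
        exact h00 (hctr ▸ (hs_mem x).mp hx))
    · exact S.pairwise_sort rel
    · exact L_sorted
  have hs_in : s ∈ L.sublistsLen 5 := List.mem_sublistsLen.mpr ⟨hs_sub, hs_len⟩
  have hkey : pairwiseB s = decide (s ∈ sols) := by
    have := List.all_eq_true.mp checkL s hs_in
    exact eq_of_beq this
  -- LHS of the iff translated to an index-level statement
  have hL : (∀ A ∈ T, ∀ B ∈ T, A ≠ B → A * B = -(B * A)) ↔ pairwiseB s = true := by
    rw [pairwiseB_iff]
    constructor
    · intro h
      apply hs_nodup.pairwise_of_forall_ne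
      intro a ha b hb hab
      have haT : Pm a ∈ T := (hs_mem a).mp ha
      have hbT : Pm b ∈ T := (hs_mem b).mp hb
      have hne : Pm a ≠ Pm b := fun hc => hab (Pm_inj hc)
      exact (anti_iff hab).mp (h _ haT _ hbT hne)
    · intro h A hA B hB hAB
      obtain ⟨a, _, ha⟩ := hPT A hA
      obtain ⟨b, _, hb⟩ := hPT B hB
      have haS : a ∈ s := (hs_mem a).mpr (by rw [hS0, Set.mem_preimage, ha]; exact hA)
      have hbS : b ∈ s := (hs_mem b).mpr (by rw [hS0, Set.mem_preimage, hb]; exact hB)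
      have hab : a ≠ b := fun hc => hAB (by rw [← ha, ← hb, hc])
      haveI : Std.Symm (fun x y : Fin 4 × Fin 4 => ac2 x y = true) :=
        ⟨fun x y hxy => (ac2_symm x y) ▸ hxy⟩
      have := h.forall haS hbS hab
      rw [← ha, ← hb]
      exact (anti_iff hab).mpr this
  -- RHS: T = Mᵢ ↔ s = lᵢ
  have hTeq : T = Pm '' {x | x ∈ s} := by
    have hset : S0 = {x | x ∈ s} := by
      ext x
      exact (hs_mem x).symm
    rw [← him, hset]
  have hMl : ∀ (l : List (Fin 4 × Fin 4)) (M : Set (Matrix (Fin 2 × Fin 2) (Fin 2 × Fin 2) ℂ)),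
      l.Pairwise rel → l.Nodup → Pm '' {x | x ∈ l} = M → (T = M ↔ s = l) := by
    intro l M hlsort hlnodup hlM
    rw [← hlM, hTeq, Set.image_eq_image Pm_inj]
    constructor
    · intro h
      refine List.Perm.eq_of_pairwise' (S.pairwise_sort rel) hlsort ?_
      refine (List.perm_ext_iff_of_nodup hs_nodup hlnodup).mpr ?_
      intro x
      exact Set.ext_iff.mp h x
    · intro h
      rw [h]
  rw [hL, hkey]
  have hsols : s ∈ sols ↔ (s = l₁ ∨ s = l₂ ∨ s = l₃ ∨ s = l₄ ∨ s = l₅ ∨ s = l₆) := by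
    simp [sols]
  have e₁ : T = M₁ ↔ s = l₁ := by
    refine hMl l₁ M₁ (by decide) (by decide) ?_
    show Pm '' {x | x ∈ l₁} = M₁
    have : {x | x ∈ l₁} = ({(1,0),(2,0),(3,1),(3,2),(3,3)} : Set (Fin 4 × Fin 4)) := by
      ext x; simp [l₁]
    rw [this]
    simp only [Set.image_insert_eq, Set.image_singleton, M₁, Pm, p]
  have e₂ : T = M₂ ↔ s = l₂ := by
    refine hMl l₂ M₂ (by decide) (by decide) ?_
    have : {x | x ∈ l₂} = ({(1,0),(2,1),(2,2),(2,3),(3,0)} : Set (Fin 4 × Fin 4)) := by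
      ext x; simp [l₂]
    rw [this]
    simp only [Set.image_insert_eq, Set.image_singleton, M₂, Pm, p]
    rw [set5_perm₁]
  have e₃ : T = M₃ ↔ s = l₃ := by
    refine hMl l₃ M₃ (by decide) (by decide) ?_
    have : {x | x ∈ l₃} = ({(1,1),(1,2),(1,3),(2,0),(3,0)} : Set (Fin 4 × Fin 4)) := by
      ext x; simp [l₃]
    rw [this]
    simp only [Set.image_insert_eq, Set.image_singleton, M₃, Pm, p]
    rw [set5_perm₂]
  have e₄ : T = M₄ ↔ s = l₄ := by
    refine hMl l₄ M₄ (by decide) (by decide) ?_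
    have : {x | x ∈ l₄} = ({(0,1),(0,2),(1,3),(2,3),(3,3)} : Set (Fin 4 × Fin 4)) := by
      ext x; simp [l₄]
    rw [this]
    simp only [Set.image_insert_eq, Set.image_singleton, M₄, Pm, p]
  have e₅ : T = M₅ ↔ s = l₅ := by
    refine hMl l₅ M₅ (by decide) (by decide) ?_
    have : {x | x ∈ l₅} = ({(0,1),(0,3),(1,2),(2,2),(3,2)} : Set (Fin 4 × Fin 4)) := by
      ext x; simp [l₅]
    rw [this]
    simp only [Set.image_insert_eq, Set.image_singleton, M₅, Pm, p]
  have e₆ : T = M₆ ↔ s = l₆ := by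
    refine hMl l₆ M₆ (by decide) (by decide) ?_
    have : {x | x ∈ l₆} = ({(0,2),(0,3),(1,1),(2,1),(3,1)} : Set (Fin 4 × Fin 4)) := by
      ext x; simp [l₆]
    rw [this]
    simp only [Set.image_insert_eq, Set.image_singleton, M₆, Pm, p]
  rw [e₁, e₂, e₃, e₄, e₅, e₆, ← hsols]
  simp

end Stmt2
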